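/- Given n agents with additive valuations over m divisible objects and any feasible fractional allocation z*, there exists a feasible fractional allocation z with at most n−1 sharings such that every agent receives at least as much utility as in z*. -/

import Mathlib

open Finset

/-- `z` is a feasible fractional allocation of `m` objects among `n` agents. -/
def isAlloc {n m : ℕ} (z : Fin n → Fin m → ℝ) : Prop :=
  (∀ i o, 0 ≤ z i o) ∧ ∀ o, ∑ i, z i o = 1

/-- Agent `i`'s additive utility for her own bundle in allocation `z`. -/
noncomputable def util {n m : ℕ} (v z : Fin n → Fin m → ℝ) (i : Fin n) : ℝ :=
  ∑ o, v i o * z i o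

/-- The number of sharings of allocation `z`: `Σ_o (|{i : z i o > 0}| − 1)`. -/
noncomputable def sharings {n m : ℕ} (z : Fin n → Fin m → ℝ) : ℕ :=
  ∑ o, ((univ.filter fun i => 0 < z i o).card - 1)

/-- Support of an allocation, as a finset of (agent, object) pairs. -/
noncomputable def suppF {n m : ℕ} (z : Fin n → Fin m → ℝ) : Finset (Fin n × Fin m) :=
  univ.filter fun p => z p.1 p.2 ≠ 0

lemma card_suppF {n m : ℕ} (z : Fin n → Fin m → ℝ) (hz : isAlloc z) :
    (suppF z).card = sharings z + m := by
  classical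
  have hcolpos : ∀ o, 1 ≤ (univ.filter fun i => 0 < z i o).card := by
    intro o
    have hne : ∃ i, 0 < z i o := by
      by_contra h
      push_neg at h
      have h0 : ∀ i ∈ (univ : Finset (Fin n)), z i o = 0 :=
        fun i _ => le_antisymm (h i) (hz.1 i o)
      have := hz.2 o
      rw [Finset.sum_eq_zero h0] at this
      norm_num at this
    obtain ⟨i, hi⟩ := hne
    exact Finset.card_pos.mpr ⟨i, Finset.mem_filter.mpr ⟨Finset.mem_univ i, hi⟩⟩
  have hfilter : ∀ o, ((univ : Finset (Fin n)).filter fun i => z i o ≠ 0)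
      = univ.filter fun i => 0 < z i o := by
    intro o
    apply Finset.filter_congr
    intro i _
    constructor
    · exact fun h => lt_of_le_of_ne (hz.1 i o) (Ne.symm h)
    · exact fun h => ne_of_gt h
  have hcards : (suppF z).card = ∑ o, ((univ : Finset (Fin n)).filter fun i => z i o ≠ 0).card := by
    rw [suppF, Finset.card_filter, Fintype.sum_prod_type, Finset.sum_comm]
    simp [Finset.card_filter]
  rw [hcards]
  rw [Finset.sum_congr rfl fun o _ => congrArg Finset.card (hfilter o)]
  rw [sharings]
  have : ∀ o ∈ (univ : Finset (Fin m)),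
      ((univ : Finset (Fin n)).filter fun i => 0 < z i o).card
        = (((univ : Finset (Fin n)).filter fun i => 0 < z i o).card - 1) + 1 :=
    fun o _ => (Nat.sub_add_cancel (hcolpos o)).symm
  rw [Finset.sum_congr rfl this, Finset.sum_add_distrib]
  simp

/-- Column-sums linear map. -/
noncomputable def colSumMap (n m : ℕ) : (Fin n → Fin m → ℝ) →ₗ[ℝ] (Fin m → ℝ) where
  toFun d o := ∑ i, d i o
  map_add' a b := by funext o; simp [Finset.sum_add_distrib]
  map_smul' c a := by funext o; simp [Finset.mul_sum]

/-- Utility-gains linear map. -/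
noncomputable def gainMap {n m : ℕ} (v : Fin n → Fin m → ℝ) :
    (Fin n → Fin m → ℝ) →ₗ[ℝ] (Fin n → ℝ) where
  toFun d i := ∑ o, v i o * d i o
  map_add' a b := by funext i; simp [Finset.sum_add_distrib, mul_add]
  map_smul' c a := by
    funext i; simp [Finset.mul_sum]; exact Finset.sum_congr rfl fun o _ => by ring

/-- Extension-by-zero linear map from functions on a support finset. -/
noncomputable def extMap {n m : ℕ} (S : Finset (Fin n × Fin m)) :
    (↥S → ℝ) →ₗ[ℝ] (Fin n → Fin m → ℝ) where
  toFun c i o := if h : (i, o) ∈ S then c ⟨(i, o), h⟩ else 0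
  map_add' a b := by
    funext i o; simp only [Pi.add_apply]; split_ifs <;> simp
  map_smul' r a := by
    funext i o; simp only [Pi.smul_apply, RingHom.id_apply, smul_eq_mul]
    split_ifs <;> simp

lemma exists_direction {n m : ℕ} (v z : Fin n → Fin m → ℝ) (hn : 0 < n)
    (hcard : n + m ≤ (suppF z).card) :
    ∃ d : Fin n → Fin m → ℝ, d ≠ 0 ∧ (∀ i o, z i o = 0 → d i o = 0) ∧
      (∀ o, ∑ i, d i o = 0) ∧ (∀ i, 0 ≤ ∑ o, v i o * d i o) := by
  classical
  set S := suppF z with hS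
  have hsupp : ∀ (c : ↥S → ℝ) (i : Fin n) (o : Fin m), z i o = 0 → extMap S c i o = 0 := by
    intro c i o h
    have : (i, o) ∉ S := by simp [hS, suppF, h]
    simp [extMap, this]
  set L : (↥S → ℝ) →ₗ[ℝ] (Fin m → ℝ) := (colSumMap n m).comp (extMap S) with hL
  set K := LinearMap.ker L with hK
  have hfrK : n ≤ Module.finrank ℝ K := by
    have h1 := L.finrank_range_add_finrank_ker
    have h2 : Module.finrank ℝ (↥S → ℝ) = S.card := by
      rw [Module.finrank_pi, Fintype.card_coe]
    have h3 : Module.finrank ℝ (LinearMap.range L) ≤ m := by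
      have := Submodule.finrank_le (LinearMap.range L)
      rwa [Module.finrank_pi, Fintype.card_fin] at this
    have h4 : Module.finrank ℝ K = Module.finrank ℝ (LinearMap.ker L) := rfl
    omega
  set g : ↥K →ₗ[ℝ] (Fin n → ℝ) := ((gainMap v).comp (extMap S)).comp K.subtype with hg
  have hcol : ∀ (c : ↥K) (o : Fin m), ∑ i, extMap S c.1 i o = 0 := by
    intro c o
    have hc2 : L c.1 = 0 := c.2
    have h := congrFun hc2 o
    have h2 : colSumMap n m (extMap S c.1) o = (0 : Fin m → ℝ) o := h
    simpa [colSumMap] using h2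
  by_cases hinj : Function.Injective g
  · have hle : Module.finrank ℝ K ≤ n := by
      have := LinearMap.finrank_le_finrank_of_injective hinj
      rwa [Module.finrank_pi, Fintype.card_fin] at this
    have heq : Module.finrank ℝ K = n := le_antisymm hle hfrK
    have hrange : LinearMap.range g = ⊤ := by
      apply Submodule.eq_top_of_finrank_eq
      rw [LinearMap.finrank_range_of_inj hinj, heq, Module.finrank_pi, Fintype.card_fin]
    have hsurj : Function.Surjective g := LinearMap.range_eq_top.mp hrange
    obtain ⟨c, hc⟩ := hsurj (fun _ => (1 : ℝ))
    have hgain : ∀ i, gainMap v (extMap S c.1) i = 1 := fun i => congrFun hc i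
    refine ⟨extMap S c.1, ?_, fun i o h => hsupp _ _ _ h, hcol c, ?_⟩
    · intro h0
      have h := hgain ⟨0, hn⟩
      rw [h0, map_zero] at h
      simp at h
    · intro i
      have h := hgain i
      show (0 : ℝ) ≤ gainMap v (extMap S c.1) i
      rw [h]
      norm_num
  · rw [injective_iff_map_eq_zero] at hinj
    push_neg at hinj
    obtain ⟨c, hc0, hcne⟩ := hinj
    refine ⟨extMap S c.1, ?_, fun i o h => hsupp _ _ _ h, hcol c, ?_⟩
    · intro h0
      apply hcne
      apply Subtype.ext
      funext q
      have hq : extMap S c.1 q.1.1 q.1.2 = 0 := by rw [h0]; simp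
      simpa [extMap, q.2] using hq
    · intro i
      have h : gainMap v (extMap S c.1) i = 0 := by
        have := congrFun hc0 i
        exact this
      show (0 : ℝ) ≤ gainMap v (extMap S c.1) i
      rw [h]

lemma step_lemma {n m : ℕ} (v z d : Fin n → Fin m → ℝ) (hz : isAlloc z)
    (hd0 : d ≠ 0) (hsupp : ∀ i o, z i o = 0 → d i o = 0)
    (hcol : ∀ o, ∑ i, d i o = 0) (hgain : ∀ i, 0 ≤ ∑ o, v i o * d i o) :
    ∃ z' : Fin n → Fin m → ℝ, isAlloc z' ∧ (∀ i, util v z i ≤ util v z' i) ∧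
      (suppF z').card < (suppF z).card := by
  classical
  -- there is a negative entry of d
  have hneg : ∃ p : Fin n × Fin m, d p.1 p.2 < 0 := by
    by_contra h
    push_neg at h
    apply hd0
    funext i o
    have ho := hcol o
    have hall : ∀ j ∈ (univ : Finset (Fin n)), d j o = 0 := by
      have := (Finset.sum_eq_zero_iff_of_nonneg (fun j _ => h (j, o))).mp ho
      exact fun j hj => this j hj
    exact hall i (Finset.mem_univ i)
  set N : Finset (Fin n × Fin m) := univ.filter (fun p => d p.1 p.2 < 0) with hN
  have hNne : N.Nonempty := by
    obtain ⟨p, hp⟩ := hneg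
    exact ⟨p, Finset.mem_filter.mpr ⟨Finset.mem_univ p, hp⟩⟩
  set f : Fin n × Fin m → ℝ := fun p => z p.1 p.2 / (-(d p.1 p.2)) with hf
  set t : ℝ := N.inf' hNne f with ht
  have hzpos : ∀ p ∈ N, 0 < z p.1 p.2 := by
    intro p hp
    have hdp : d p.1 p.2 < 0 := (Finset.mem_filter.mp hp).2
    rcases eq_or_lt_of_le (hz.1 p.1 p.2) with h | h
    · exact absurd (hsupp p.1 p.2 h.symm) (ne_of_lt hdp)
    · exact h
  have htpos : 0 < t := by
    rw [ht, Finset.lt_inf'_iff]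
    intro p hp
    exact div_pos (hzpos p hp) (neg_pos.mpr (Finset.mem_filter.mp hp).2)
  set z' : Fin n → Fin m → ℝ := fun i o => z i o + t * d i o with hz'
  have hnonneg : ∀ i o, 0 ≤ z' i o := by
    intro i o
    rcases le_or_gt 0 (d i o) with h | h
    · exact add_nonneg (hz.1 i o) (mul_nonneg htpos.le h)
    · have hmem : (i, o) ∈ N := Finset.mem_filter.mpr ⟨Finset.mem_univ _, h⟩
      have hle : t ≤ z i o / (-(d i o)) := Finset.inf'_le f hmem
      have : t * (-(d i o)) ≤ z i o := by
        rw [← le_div_iff₀ (neg_pos.mpr h)]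
        exact hle
      simp only [hz']
      nlinarith
  have halloc : isAlloc z' := by
    refine ⟨hnonneg, fun o => ?_⟩
    simp only [hz']
    rw [Finset.sum_add_distrib, hz.2 o, ← Finset.mul_sum, hcol o]
    ring
  have hutil : ∀ i, util v z i ≤ util v z' i := by
    intro i
    simp only [util, hz']
    have : ∑ o, v i o * (z i o + t * d i o)
        = (∑ o, v i o * z i o) + t * ∑ o, v i o * d i o := by
      rw [Finset.mul_sum, ← Finset.sum_add_distrib]
      exact Finset.sum_congr rfl fun o _ => by ring
    rw [this]
    nlinarith [hgain i]
  have hsub : suppF z' ⊆ suppF z := by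
    intro p hp
    rw [suppF, Finset.mem_filter] at hp ⊢
    refine ⟨Finset.mem_univ _, fun h => hp.2 ?_⟩
    simp only [hz']
    rw [h, hsupp p.1 p.2 h]
    ring
  obtain ⟨q, hqN, hqt⟩ := Finset.exists_mem_eq_inf' hNne f
  have hqz : z' q.1 q.2 = 0 := by
    have hdq : d q.1 q.2 < 0 := (Finset.mem_filter.mp hqN).2
    have ht2 : t = f q := hqt
    have hdq' : d q.1 q.2 ≠ 0 := ne_of_lt hdq
    simp only [hz']
    rw [ht2]
    simp only [hf]
    rw [div_mul_eq_mul_div, mul_div_assoc, div_neg, div_self hdq']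
    ring
  have hssub : suppF z' ⊂ suppF z := by
    refine Finset.ssubset_iff_of_subset hsub |>.mpr ?_
    refine ⟨q, ?_, ?_⟩
    · rw [suppF, Finset.mem_filter]
      exact ⟨Finset.mem_univ _, ne_of_gt (hzpos q hqN)⟩
    · rw [suppF, Finset.mem_filter]
      push_neg
      intro _
      simp [hqz]
  exact ⟨z', halloc, hutil, Finset.card_lt_card hssub⟩

/-- For any feasible allocation `z*` there is a feasible allocation with at most `n − 1`
sharings giving every agent at least as much utility. -/
theorem exists_weakly_better_few_sharings {n m : ℕ}
    (v zs : Fin n → Fin m → ℝ) (hzs : isAlloc zs) :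
    ∃ z : Fin n → Fin m → ℝ, isAlloc z ∧ sharings z ≤ n - 1 ∧
      ∀ i, util v zs i ≤ util v z i := by
  classical
  suffices H : ∀ k (z : Fin n → Fin m → ℝ), (suppF z).card = k → isAlloc z →
      ∃ z' : Fin n → Fin m → ℝ, isAlloc z' ∧ sharings z' ≤ n - 1 ∧
        ∀ i, util v z i ≤ util v z' i by
    exact H _ zs rfl hzs
  intro k
  induction k using Nat.strong_induction_on with
  | _ k IH =>
    intro z hk hz
    by_cases hsh : sharings z ≤ n - 1
    · exact ⟨z, hz, hsh, fun i => le_refl _⟩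
    · have hn : 0 < n := by
        rcases Nat.eq_zero_or_pos n with hn0 | hn
        · exfalso
          rcases Nat.eq_zero_or_pos m with hm0 | hm
          · apply hsh
            have : sharings z = 0 := by
              rw [sharings]
              apply Finset.sum_eq_zero
              intro o _
              exact absurd (o.2) (by omega)
            omega
          · have := hz.2 ⟨0, hm⟩
            subst hn0
            simp at this
        · exact hn
      have hcard : n + m ≤ (suppF z).card := by
        have h1 := card_suppF z hz
        omega
      obtain ⟨d, hd0, hsupp, hcol, hgain⟩ := exists_direction v z hn hcard
      obtain ⟨z', hz', hutil, hcardlt⟩ := step_lemma v z d hz hd0 hsupp hcol hgain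
      obtain ⟨z'', hz'', hsh'', hutil''⟩ := IH (suppF z').card (by omega) z' rfl hz'
      exact ⟨z'', hz'', hsh'', fun i => le_trans (hutil i) (hutil'' i)⟩
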